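/- Let \delta > 0 and let \lambda : \mathbb{N} \to \mathbb{R} satisfy \lambda_n \geq \delta for all n, and suppose that F(t) := \sum_{n} e^{-t\lambda_n} is finite for every t > 0. Assume there are real constants C_1, C_2, C_3, M such that |F(t) - C_1/t - C_2 t^{-1/2} - C_3| \leq M t^{1/2} for all t \in (0,1]. Then: (i) the series \zeta_\lambda(s) = \sum_n \lambda_n^{-s} converges for every complex s with Re(s) > 1; (ii) there exists a function G : \mathbb{C} \to \mathbb{C} which is complex-differentiable at every point of the set \{s : Re(s) > -1/2\} \setminus \{1/2, 1\}, agrees with \zeta_\lambda(s) whenever Re(s) > 1, and satisfies G(0) = C_3. In particular \zeta_\lambda extends holomorphically to a neighborhood of 0, so the height -G'(0) is well defined. -/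

import Mathlib

open Real Complex Set MeasureTheory Filter Asymptotics Topology

section helpers
variable {δ : ℝ}

lemma aux_int_rpow_exp {σ r : ℝ} (hσ : 0 < σ) (hr : 0 < r) :
    IntegrableOn (fun t : ℝ => t ^ (σ - 1) * Real.exp (-(r * t))) (Set.Ioi 0) := by
  have h := Real.GammaIntegral_convergent hσ
  rw [← mul_zero r, ← integrableOn_Ioi_comp_mul_left_iff _ _ hr] at h
  refine IntegrableOn.congr_fun (h.const_mul ((1/r) ^ (σ-1))) (fun t ht => ?_) measurableSet_Ioi
  rw [mem_Ioi] at ht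
  rw [Real.mul_rpow hr.le ht.le, one_div, Real.inv_rpow hr.le]
  field_simp [ne_of_gt (Real.rpow_pos_of_pos hr (σ-1))]

lemma aux_mellinconv_add {f g : ℝ → ℂ} {s : ℂ} (hf : MellinConvergent f s)
    (hg : MellinConvergent g s) : MellinConvergent (fun t => f t + g t) s := by
  refine (hf.add hg).congr (Filter.EventuallyEq.of_eq ?_)
  funext t; simp [smul_add, mul_add]

lemma aux_mellin_add {f g : ℝ → ℂ} {s : ℂ} (hf : MellinConvergent f s)
    (hg : MellinConvergent g s) :
    mellin (fun t => f t + g t) s = mellin f s + mellin g s := by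
  unfold mellin
  simp only [smul_add]
  exact integral_add hf hg

lemma aux_mellin_sub {f g : ℝ → ℂ} {s : ℂ} (hf : MellinConvergent f s)
    (hg : MellinConvergent g s) :
    mellin (fun t => f t - g t) s = mellin f s - mellin g s := by
  unfold mellin
  simp only [smul_sub]
  exact integral_sub hf hg

lemma aux_mellinconv_cmul {f : ℝ → ℂ} {s : ℂ} (hf : MellinConvergent f s) (c : ℂ) :
    MellinConvergent (fun t => c * f t) s := by
  simpa only [smul_eq_mul] using hf.const_smul c

lemma aux_mellin_cmul (f : ℝ → ℂ) (s : ℂ) (c : ℂ) :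
    mellin (fun t => c * f t) s = c * mellin f s := by
  simpa only [smul_eq_mul] using mellin_const_smul f s c

lemma aux_summable {δ : ℝ} (hδ : 0 < δ) {lam : ℕ → ℝ} (hlam : ∀ n, δ ≤ lam n)
    (hsum : ∀ t : ℝ, 0 < t → Summable (fun n : ℕ => Real.exp (-t * lam n)))
    {K : ℝ} (hK : ∀ t ∈ Set.Ioc (0:ℝ) 1, (∑' n : ℕ, Real.exp (-t * lam n)) ≤ K / t)
    {σ : ℝ} (hσ : 1 < σ) :
    Summable (fun n : ℕ => (lam n) ^ (-σ)) := by
  have hlam0 : ∀ n, 0 < lam n := fun n => hδ.trans_le (hlam n)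
  have hσ0 : 0 < σ := by linarith
  have hΓ : 0 < Real.Gamma σ := Real.Gamma_pos_of_pos hσ0
  set c₁ : ℝ := ∫ t in Set.Ioc (0:ℝ) 1, K * t ^ (σ - 2) with hc₁
  set c₂ : ℝ := ∫ t in Set.Ioi (1:ℝ),
      ((∑' n : ℕ, Real.exp (-1 * lam n)) * Real.exp δ) * (t ^ (σ - 1) * Real.exp (-(δ * t)))
      with hc₂
  have hint2 : IntegrableOn (fun t : ℝ =>
      ((∑' n : ℕ, Real.exp (-1 * lam n)) * Real.exp δ) * (t ^ (σ - 1) * Real.exp (-(δ * t))))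
      (Set.Ioi 1) := IntegrableOn.mono_set ((aux_int_rpow_exp hσ0 hδ).const_mul _) (Ioi_subset_Ioi zero_le_one)
  have hint1 : IntegrableOn (fun t : ℝ => K * t ^ (σ - 2)) (Set.Ioc (0:ℝ) 1) := by
    have h := intervalIntegral.intervalIntegrable_rpow' (a := 0) (b := 1)
      (show (-1:ℝ) < σ - 2 by linarith)
    rw [intervalIntegrable_iff_integrableOn_Ioc_of_le zero_le_one] at h
    exact h.const_mul K
  refine summable_of_sum_le (c := (c₁ + c₂) / Real.Gamma σ)
    (fun n => Real.rpow_nonneg (hlam0 n).le _) (fun u => ?_)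
  rw [le_div_iff₀ hΓ]
  have hIu : IntegrableOn (fun t : ℝ => t ^ (σ-1) * ∑ n ∈ u, Real.exp (-(lam n * t)))
      (Set.Ioi 0) := by
    simp_rw [Finset.mul_sum]
    exact integrable_finset_sum _ (fun n _ => aux_int_rpow_exp hσ0 (hlam0 n))
  have key : (∑ n ∈ u, lam n ^ (-σ)) * Real.Gamma σ
      = ∫ t in Set.Ioi (0:ℝ), t ^ (σ-1) * ∑ n ∈ u, Real.exp (-(lam n * t)) := by
    simp_rw [Finset.mul_sum, MeasureTheory.integral_finset_sum u
      (fun n _ => aux_int_rpow_exp hσ0 (hlam0 n)), Finset.sum_mul]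
    refine Finset.sum_congr rfl (fun n _ => ?_)
    rw [Real.integral_rpow_mul_exp_neg_mul_Ioi hσ0 (hlam0 n), one_div,
      Real.inv_rpow (hlam0 n).le, ← Real.rpow_neg (hlam0 n).le]
  have hsplit : (∫ t in Set.Ioi (0:ℝ), t ^ (σ-1) * ∑ n ∈ u, Real.exp (-(lam n * t)))
      = (∫ t in Set.Ioc (0:ℝ) 1, t ^ (σ-1) * ∑ n ∈ u, Real.exp (-(lam n * t)))
      + ∫ t in Set.Ioi (1:ℝ), t ^ (σ-1) * ∑ n ∈ u, Real.exp (-(lam n * t)) := by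
    rw [← setIntegral_union (Set.Ioc_disjoint_Ioi le_rfl) measurableSet_Ioi
      (hIu.mono_set Set.Ioc_subset_Ioi_self) (hIu.mono_set (Ioi_subset_Ioi zero_le_one)),
      Set.Ioc_union_Ioi_eq_Ioi zero_le_one]
  have hb1 : (∫ t in Set.Ioc (0:ℝ) 1, t ^ (σ-1) * ∑ n ∈ u, Real.exp (-(lam n * t))) ≤ c₁ := by
    refine setIntegral_mono_on (hIu.mono_set Set.Ioc_subset_Ioi_self) hint1
      measurableSet_Ioc (fun t ht => ?_)
    have h1 : (∑ n ∈ u, Real.exp (-(lam n * t))) ≤ K / t := by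
      have h2 : (∑ n ∈ u, Real.exp (-(lam n * t))) ≤ ∑' n : ℕ, Real.exp (-t * lam n) := by
        have h3 := Summable.sum_le_tsum u (fun n _ => (Real.exp_pos (-t * lam n)).le) (hsum t ht.1)
        simpa [neg_mul, mul_comm] using h3
      exact h2.trans (hK t ht)
    calc t ^ (σ-1) * ∑ n ∈ u, Real.exp (-(lam n * t))
        ≤ t ^ (σ-1) * (K / t) :=
          mul_le_mul_of_nonneg_left h1 (Real.rpow_nonneg ht.1.le _)
      _ = K * t ^ (σ-2) := by
          rw [show σ - 2 = (σ-1) + (-1) by ring, Real.rpow_add ht.1, Real.rpow_neg_one]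
          ring
  have hb2 : (∫ t in Set.Ioi (1:ℝ), t ^ (σ-1) * ∑ n ∈ u, Real.exp (-(lam n * t))) ≤ c₂ := by
    refine setIntegral_mono_on (hIu.mono_set (Ioi_subset_Ioi zero_le_one)) hint2
      measurableSet_Ioi (fun t ht => ?_)
    rw [mem_Ioi] at ht
    have ht0 : (0:ℝ) < t := lt_trans one_pos ht
    have hterm : ∀ n, Real.exp (-(lam n * t))
        ≤ Real.exp (-1 * lam n) * (Real.exp δ * Real.exp (-(δ * t))) := by
      intro n
      rw [← Real.exp_add, ← Real.exp_add, Real.exp_le_exp]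
      nlinarith [mul_nonneg (sub_nonneg.2 ht.le) (sub_nonneg.2 (hlam n))]
    have hsum_u : (∑ n ∈ u, Real.exp (-(lam n * t)))
        ≤ (∑' n : ℕ, Real.exp (-1 * lam n)) * (Real.exp δ * Real.exp (-(δ * t))) := by
      calc (∑ n ∈ u, Real.exp (-(lam n * t)))
          ≤ ∑ n ∈ u, Real.exp (-1 * lam n) * (Real.exp δ * Real.exp (-(δ * t))) :=
            Finset.sum_le_sum (fun n _ => hterm n)
        _ = (∑ n ∈ u, Real.exp (-1 * lam n)) * (Real.exp δ * Real.exp (-(δ * t))) :=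
            (Finset.sum_mul ..).symm
        _ ≤ _ := by
            refine mul_le_mul_of_nonneg_right
              (Summable.sum_le_tsum u (fun n _ => (Real.exp_pos _).le) (hsum 1 one_pos))
              (by positivity)
    calc t ^ (σ-1) * ∑ n ∈ u, Real.exp (-(lam n * t))
        ≤ t ^ (σ-1) * ((∑' n : ℕ, Real.exp (-1 * lam n)) * (Real.exp δ * Real.exp (-(δ * t)))) :=
          mul_le_mul_of_nonneg_left hsum_u (Real.rpow_nonneg ht0.le _)
      _ = ((∑' n : ℕ, Real.exp (-1 * lam n)) * Real.exp δ) * (t ^ (σ-1) * Real.exp (-(δ * t))) :=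
          by ring
  calc (∑ n ∈ u, lam n ^ (-σ)) * Real.Gamma σ
      = _ := key
    _ = _ := hsplit
    _ ≤ c₁ + c₂ := add_le_add hb1 hb2

end helpers

/-- If `λ_n ≥ δ > 0`, the heat trace `F(t) = ∑ₙ e^{-t λₙ}` is finite for all
`t > 0` and admits a short-time expansion `F(t) = C₁/t + C₂ t^{-1/2} + C₃ + O(t^{1/2})` on
`(0,1]`, then the spectral zeta series `∑ₙ λₙ^{-s}` converges for `Re s > 1` and extends to
a function `G` differentiable on `{Re s > -1/2} \ {1/2, 1}` with `G(0) = C₃`; in particular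
the height `-G'(0)` is well defined. -/
theorem heat_trace_zeta_continuation (δ : ℝ) (hδ : 0 < δ) (lam : ℕ → ℝ)
    (hlam : ∀ n, δ ≤ lam n)
    (hsum : ∀ t : ℝ, 0 < t → Summable (fun n : ℕ => Real.exp (-t * lam n)))
    (C₁ C₂ C₃ M : ℝ)
    (hexp : ∀ t : ℝ, t ∈ Set.Ioc (0 : ℝ) 1 →
      |(∑' n : ℕ, Real.exp (-t * lam n)) - C₁ / t - C₂ / Real.sqrt t - C₃|
        ≤ M * Real.sqrt t) :
    (∀ s : ℂ, 1 < s.re → Summable (fun n : ℕ => ((lam n : ℂ)) ^ (-s))) ∧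
    ∃ G : ℂ → ℂ,
      (∀ s : ℂ, -1 / 2 < s.re → s ≠ 1 / 2 → s ≠ 1 → DifferentiableAt ℂ G s) ∧
      (∀ s : ℂ, 1 < s.re → G s = ∑' n : ℕ, ((lam n : ℂ)) ^ (-s)) ∧
      G 0 = (C₃ : ℂ) := by
  have hlam0 : ∀ n, 0 < lam n := fun n => hδ.trans_le (hlam n)
  set F : ℝ → ℝ := fun t => ∑' n : ℕ, Real.exp (-t * lam n) with hFdef
  set K : ℝ := |C₁| + |C₂| + |C₃| + |M| with hKdef
  -- the crude bound F t ≤ K / t on (0,1]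
  have hKb : ∀ t ∈ Set.Ioc (0:ℝ) 1, F t ≤ K / t := by
    intro t ht
    obtain ⟨ht0, ht1⟩ := ht
    have hst0 : 0 < Real.sqrt t := Real.sqrt_pos.2 ht0
    have hst1 : Real.sqrt t ≤ 1 := by
      rw [show (1:ℝ) = Real.sqrt 1 by simp]
      exact Real.sqrt_le_sqrt ht1
    have hts : t ≤ Real.sqrt t := by
      nth_rewrite 1 [← Real.sq_sqrt ht0.le]
      nlinarith
    have h1 := (abs_le.1 (hexp t ⟨ht0, ht1⟩)).2
    have e1 : C₁ / t ≤ |C₁| / t := by gcongr; exact le_abs_self _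
    have e2 : C₂ / Real.sqrt t ≤ |C₂| / t := by
      have h21 : C₂ / Real.sqrt t ≤ |C₂| / Real.sqrt t := by
        gcongr
        exact le_abs_self _
      refine h21.trans (div_le_div_of_nonneg_left (abs_nonneg _) ht0 hts)
    have e3 : C₃ ≤ |C₃| / t := by
      rw [le_div_iff₀ ht0]
      nlinarith [le_abs_self C₃, abs_nonneg C₃]
    have e4 : M * Real.sqrt t ≤ |M| / t := by
      rw [le_div_iff₀ ht0]
      have hMs : M * Real.sqrt t ≤ |M| * 1 := by
        calc M * Real.sqrt t ≤ |M| * Real.sqrt t := by gcongr; exact le_abs_self _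
          _ ≤ |M| * 1 := by gcongr
      nlinarith [abs_nonneg M]
    have : F t ≤ C₁ / t + C₂ / Real.sqrt t + C₃ + M * Real.sqrt t := by linarith
    rw [hKdef]
    have : F t ≤ |C₁| / t + |C₂| / t + |C₃| / t + |M| / t := by linarith
    calc F t ≤ |C₁| / t + |C₂| / t + |C₃| / t + |M| / t := this
      _ = (|C₁| + |C₂| + |C₃| + |M|) / t := by ring
  have hsummR : ∀ σ : ℝ, 1 < σ → Summable (fun n : ℕ => (lam n) ^ (-σ)) :=
    fun σ hσ => aux_summable hδ hlam hsum hKb hσ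
  have hsummC : ∀ s : ℂ, 1 < s.re → Summable (fun n : ℕ => ((lam n : ℂ)) ^ (-s)) := by
    intro s hs
    refine Summable.of_norm ?_
    have : (fun n : ℕ => ‖((lam n : ℂ)) ^ (-s)‖) = fun n => (lam n) ^ (-s.re) := by
      funext n
      rw [Complex.norm_cpow_eq_rpow_re_of_pos (hlam0 n), neg_re]
    rw [this]
    exact hsummR s.re hs
  refine ⟨hsummC, ?_⟩
  -- nonnegativity / monotonicity of F
  have hF0 : ∀ t : ℝ, 0 ≤ F t := fun t => tsum_nonneg (fun n => (Real.exp_pos _).le)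
  have hFanti : AntitoneOn F (Set.Ioi 0) := by
    intro a ha b hb hab
    refine Summable.tsum_le_tsum (fun n => Real.exp_le_exp.2 ?_) (hsum b (mem_Ioi.1 hb)) (hsum a (mem_Ioi.1 ha))
    nlinarith [hlam0 n, mem_Ioi.1 ha]
  have hFdecay : ∀ t : ℝ, 1 ≤ t → F t ≤ (F 1 * Real.exp δ) * Real.exp (-(δ * t)) := by
    intro t ht
    have ht0 : (0:ℝ) < t := lt_of_lt_of_le one_pos ht
    have hterm : ∀ n, Real.exp (-t * lam n)
        ≤ Real.exp (-1 * lam n) * (Real.exp δ * Real.exp (-(δ * t))) := by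
      intro n
      rw [← Real.exp_add, ← Real.exp_add, Real.exp_le_exp]
      nlinarith [mul_nonneg (sub_nonneg.2 ht) (sub_nonneg.2 (hlam n))]
    calc F t ≤ ∑' n : ℕ, Real.exp (-1 * lam n) * (Real.exp δ * Real.exp (-(δ * t))) :=
        Summable.tsum_le_tsum hterm (hsum t ht0) ((hsum 1 one_pos).mul_right _)
      _ = (F 1) * (Real.exp δ * Real.exp (-(δ * t))) := by
          rw [tsum_mul_right]
      _ = (F 1 * Real.exp δ) * Real.exp (-(δ * t)) := by ring
  -- complex-valued versions
  set Fc : ℝ → ℂ := fun t => ((F t : ℝ) : ℂ) with hFc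
  set g : ℂ → ℝ → ℂ := fun a => Set.indicator (Set.Ioc 0 1) (fun t : ℝ => (t:ℂ) ^ a) with hgdef
  set E : ℝ → ℂ := fun t => (C₁:ℂ) * g (-1) t + (C₂:ℂ) * g (-(1/2)) t + (C₃:ℂ) * g 0 t with hE
  set H : ℝ → ℂ := Fc - E with hH
  -- local integrability
  have hFcloc : LocallyIntegrableOn Fc (Set.Ioi 0) := by
    rw [locallyIntegrableOn_iff isOpen_Ioi.isLocallyClosed]
    intro k hk hkc
    exact (AntitoneOn.integrableOn_isCompact hkc (hFanti.mono hk)).ofReal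
  have hgk : ∀ (a : ℂ) (k : Set ℝ), k ⊆ Set.Ioi 0 → IsCompact k → IntegrableOn (g a) k := by
    intro a k hk hkc
    have hcont : ContinuousOn (fun t : ℝ => (t:ℂ) ^ a) k := fun t htk =>
      (continuousAt_ofReal_cpow_const _ _ (Or.inr (ne_of_gt (hk htk)))).continuousWithinAt
    exact (hcont.integrableOn_compact hkc).indicator measurableSet_Ioc
  have hEloc : LocallyIntegrableOn E (Set.Ioi 0) := by
    rw [locallyIntegrableOn_iff isOpen_Ioi.isLocallyClosed]
    intro k hk hkc
    exact (((hgk (-1) k hk hkc).const_mul _).add ((hgk (-(1/2)) k hk hkc).const_mul _)).add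
      ((hgk 0 k hk hkc).const_mul _)
  have hHloc : LocallyIntegrableOn H (Set.Ioi 0) := hFcloc.sub hEloc
  -- decay at infinity
  have hFc_top : Fc =O[atTop] fun t : ℝ => Real.exp (-δ * t) := by
    rw [Asymptotics.isBigO_iff]
    refine ⟨F 1 * Real.exp δ, ?_⟩
    filter_upwards [Filter.eventually_ge_atTop 1] with t ht
    rw [Complex.norm_real, Real.norm_eq_abs, Real.norm_eq_abs, Real.abs_exp,
      _root_.abs_of_nonneg (hF0 t), neg_mul]
    exact hFdecay t ht
  have hEzero : ∀ t : ℝ, 1 < t → E t = 0 := by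
    intro t ht
    have hnot : t ∉ Set.Ioc (0:ℝ) 1 := fun h => absurd h.2 (not_le.2 ht)
    simp [hE, hgdef, Set.indicator_of_notMem hnot]
  have hH_top : H =O[atTop] fun t : ℝ => Real.exp (-δ * t) := by
    refine hFc_top.congr' ?_ (Filter.EventuallyEq.refl _ _)
    filter_upwards [Filter.eventually_gt_atTop 1] with t ht
    show Fc t = H t
    rw [hH, Pi.sub_apply, hEzero t ht, sub_zero]
  -- behaviour near zero
  have hEIoc : ∀ t : ℝ, t ∈ Set.Ioc (0:ℝ) 1 →
      E t = ((C₁ * t⁻¹ + C₂ * (Real.sqrt t)⁻¹ + C₃ : ℝ) : ℂ) := by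
    intro t ht
    have hg1 : g (-1) t = ((t⁻¹ : ℝ) : ℂ) := by
      rw [hgdef]
      simp only [Set.indicator_of_mem ht]
      rw [show (-1 : ℂ) = ((-1 : ℝ) : ℂ) by norm_num, ← Complex.ofReal_cpow ht.1.le,
        Real.rpow_neg_one]
    have hg2 : g (-(1/2)) t = (((Real.sqrt t)⁻¹ : ℝ) : ℂ) := by
      rw [hgdef]
      simp only [Set.indicator_of_mem ht]
      rw [show (-(1/2) : ℂ) = ((-(1/2) : ℝ) : ℂ) by norm_num, ← Complex.ofReal_cpow ht.1.le,
        Real.rpow_neg ht.1.le, Real.sqrt_eq_rpow]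
    have hg3 : g 0 t = 1 := by
      rw [hgdef]
      simp only [Set.indicator_of_mem ht, Complex.cpow_zero]
    rw [hE]
    simp only [hg1, hg2, hg3]
    push_cast
    ring
  have hH_bot : H =O[𝓝[>] (0:ℝ)] (fun t : ℝ => t ^ ((1/2 : ℝ))) := by
    rw [Asymptotics.isBigO_iff]
    refine ⟨M, ?_⟩
    filter_upwards [Ioc_mem_nhdsGT one_pos] with t ht
    have hHt : H t = ((F t - C₁ / t - C₂ / Real.sqrt t - C₃ : ℝ) : ℂ) := by
      rw [hH, Pi.sub_apply, hEIoc t ht, hFc]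
      push_cast
      ring
    rw [hHt, Complex.norm_real, Real.norm_eq_abs, Real.norm_eq_abs,
      _root_.abs_of_nonneg (Real.rpow_nonneg ht.1.le (1/2 : ℝ)), ← Real.sqrt_eq_rpow]
    exact hexp t ht
  have hdiffH : ∀ s : ℂ, (-1/2 : ℝ) < s.re → DifferentiableAt ℂ (mellin H) s := by
    intro s hs
    refine mellin_differentiableAt_of_isBigO_rpow_exp (a := δ) (b := -(1/2)) hδ hHloc hH_top ?_ ?_
    · have : (fun t : ℝ => t ^ (-(-(1/2)) : ℝ)) = fun t : ℝ => t ^ ((1/2 : ℝ)) := by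
        norm_num
      rw [this]
      exact hH_bot
    · linarith
  -- the analytic continuation
  refine ⟨fun s => (mellin H s + C₁ * (s - 1)⁻¹ + C₂ * (s - 1/2)⁻¹) * (Complex.Gamma s)⁻¹
      + (C₃:ℂ) * (Complex.Gamma (s+1))⁻¹, ?_, ?_, ?_⟩
  · -- differentiability
    intro s hs hs2 hs1
    have h1 : DifferentiableAt ℂ (fun s : ℂ => (s - 1)⁻¹) s :=
      (differentiableAt_id.sub_const 1).inv (sub_ne_zero.2 hs1)
    have h2 : DifferentiableAt ℂ (fun s : ℂ => (s - 1/2)⁻¹) s :=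
      (differentiableAt_id.sub_const _).inv (sub_ne_zero.2 hs2)
    have h3 : DifferentiableAt ℂ (fun s : ℂ => (Complex.Gamma s)⁻¹) s :=
      Complex.differentiable_one_div_Gamma s
    have h4 : DifferentiableAt ℂ (fun s : ℂ => (Complex.Gamma (s+1))⁻¹) s :=
      (Complex.differentiable_one_div_Gamma.comp (differentiable_id.add_const 1)) s
    have h0 : DifferentiableAt ℂ (mellin H) s := hdiffH s (by linarith)
    exact (((h0.add (h1.const_mul _)).add (h2.const_mul _)).mul h3).add (h4.const_mul _)
  · -- agreement with the zeta series
    intro s hs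
    have hs0 : 0 < s.re := by linarith
    have hsne : s ≠ 0 := by
      intro h
      rw [h, Complex.zero_re] at hs0
      exact lt_irrefl _ hs0
    have hs1ne : s - 1 ≠ 0 := by
      intro h
      rw [sub_eq_zero.1 h, Complex.one_re] at hs
      exact lt_irrefl _ hs
    have hs2ne : s - 1/2 ≠ 0 := by
      intro h
      rw [sub_eq_zero.1 h] at hs
      norm_num [Complex.div_re] at hs
    have hΓne : Complex.Gamma s ≠ 0 := Complex.Gamma_ne_zero_of_re_pos hs0
    -- Mellin transforms of the indicator pieces
    have hm1 := hasMellin_cpow_Ioc (-1) (s := s)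
      (by simp only [Complex.neg_re, Complex.one_re]; linarith)
    have hm2 := hasMellin_cpow_Ioc (-(1/2)) (s := s)
      (by norm_num; linarith)
    have hm3 := hasMellin_cpow_Ioc 0 (s := s) (by simp only [Complex.zero_re, add_zero]; linarith)
    have hc1 : MellinConvergent (fun t => (C₁:ℂ) * g (-1) t) s :=
      aux_mellinconv_cmul hm1.1 _
    have hc2 : MellinConvergent (fun t => (C₂:ℂ) * g (-(1/2)) t) s :=
      aux_mellinconv_cmul hm2.1 _
    have hc3 : MellinConvergent (fun t => (C₃:ℂ) * g 0 t) s :=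
      aux_mellinconv_cmul hm3.1 _
    have hmE_conv : MellinConvergent E s := by
      rw [hE]
      exact aux_mellinconv_add (aux_mellinconv_add hc1 hc2) hc3
    have hmE : mellin E s = C₁ * (1/(s + -1)) + C₂ * (1/(s + -(1/2))) + C₃ * (1/(s + 0)) := by
      rw [hE, show (fun t => (C₁:ℂ) * g (-1) t + (C₂:ℂ) * g (-(1/2)) t + (C₃:ℂ) * g 0 t)
        = fun t => ((C₁:ℂ) * g (-1) t + (C₂:ℂ) * g (-(1/2)) t) + (C₃:ℂ) * g 0 t from rfl,
        aux_mellin_add (aux_mellinconv_add hc1 hc2) hc3, aux_mellin_add hc1 hc2,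
        aux_mellin_cmul, aux_mellin_cmul, aux_mellin_cmul, hm1.2, hm2.2, hm3.2]
    -- Mellin transform of Fc
    have hFc_bot : Fc =O[𝓝[>] (0:ℝ)] (fun t : ℝ => t ^ (-1 : ℝ)) := by
      rw [Asymptotics.isBigO_iff]
      refine ⟨K, ?_⟩
      filter_upwards [Ioc_mem_nhdsGT one_pos] with t ht
      rw [Complex.norm_real, Real.norm_eq_abs, Real.norm_eq_abs, _root_.abs_of_nonneg (hF0 t),
        _root_.abs_of_nonneg (Real.rpow_nonneg ht.1.le (-1 : ℝ)), Real.rpow_neg_one]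
      calc F t ≤ K / t := hKb t ht
        _ = K * t⁻¹ := by ring
    have hmFc_conv : MellinConvergent Fc s :=
      mellinConvergent_of_isBigO_rpow_exp (a := δ) (b := 1) hδ hFcloc hFc_top hFc_bot hs
    have hmH : mellin H s = mellin Fc s - mellin E s := by
      rw [hH, show (Fc - E) = fun t => Fc t - E t from rfl]
      exact aux_mellin_sub hmFc_conv hmE_conv
    -- the Dirichlet series identity
    have hzsum : Summable (fun n : ℕ => ‖(1:ℂ)‖ / (lam n) ^ s.re) := by
      have := hsummR s.re hs
      refine this.congr (fun n => ?_)
      rw [norm_one, Real.rpow_neg (hlam0 n).le, one_div]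
    have hFhs : ∀ t ∈ Set.Ioi (0:ℝ), HasSum (fun n : ℕ => (1:ℂ) * (Real.exp (-lam n * t) : ℝ))
        (Fc t) := by
      intro t ht
      simp only [one_mul]
      apply Complex.hasSum_ofReal.2
      have heq : (fun n : ℕ => Real.exp (-lam n * t)) = fun n : ℕ => Real.exp (-t * lam n) := by
        funext n
        rw [neg_mul, mul_comm, ← neg_mul]
      rw [heq]
      exact (hsum t (mem_Ioi.1 ht)).hasSum
    have hzeta := (hasSum_mellin (fun i : ℕ => Or.inr (hlam0 i)) hs0 hFhs hzsum).tsum_eq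
    have hmFc : mellin Fc s = Complex.Gamma s * ∑' n : ℕ, ((lam n : ℂ)) ^ (-s) := by
      rw [← hzeta, ← tsum_mul_left]
      refine tsum_congr (fun n => ?_)
      rw [mul_one, Complex.cpow_neg, div_eq_mul_inv]
    beta_reduce
    rw [hmH, hmFc, hmE, Complex.Gamma_add_one s hsne,
      show s + -1 = s - 1 from by ring, show s + -(1/2) = s - 1/2 from by ring,
      show s + 0 = s from by ring]
    rw [mul_inv]
    have h1 : Complex.Gamma s * (∑' n : ℕ, ((lam n : ℂ)) ^ (-s))
        - ((C₁:ℂ) * (1/(s-1)) + (C₂:ℂ) * (1/(s-1/2)) + (C₃:ℂ) * (1/s))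
        + (C₁:ℂ) * (s-1)⁻¹ + (C₂:ℂ) * (s-1/2)⁻¹
        = Complex.Gamma s * (∑' n : ℕ, ((lam n : ℂ)) ^ (-s)) - (C₃:ℂ) * s⁻¹ := by
      rw [one_div, one_div, one_div]
      ring
    rw [h1, sub_mul, mul_comm (Complex.Gamma s), mul_assoc,
      mul_inv_cancel₀ hΓne, mul_one]
    ring
  · -- value at 0
    simp [Complex.Gamma_zero, Complex.Gamma_one]
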